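/- arXiv:1808.06121 — 2 statements merged into one kernel-verified Lean document; each statement's English description precedes it below -/
import Mathlib

section
/- Let R be the random graph and f, f' ∈ Aut(R) two automorphisms, each satisfying: (1) infinitely many infinite orbits and no finite orbits; (2) for all finite disjoint A, B ⊆ V there is v ∉ O^f(A∪B) adjacent to every vertex of A and not adjacent to any vertex of O^f(A∪B)∖A; (3) v is never adjacent to f^k(v) for any v and k ∈ ℤ; (4) for all v, w the set {k ∈ ℤ : v adjacent to f^k(w)} is finite; and the analogous conditions for f'. Then f and f' are conjugate in Aut(R). -/
/-- The defining extension property of the random (Rado) graph. -/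
def ExtensionProperty {V : Type*} (G : SimpleGraph V) : Prop :=
  ∀ A B : Finset V, Disjoint A B →
    ∃ v : V, (∀ a ∈ A, G.Adj a v) ∧ (∀ b ∈ B, ¬ G.Adj b v)

/-- The orbit `O^f(v) = {f^k v : k ∈ ℤ}` of a vertex under an automorphism. -/
def fOrbit {V : Type*} {G : SimpleGraph V} (f : G ≃g G) (v : V) : Set V :=
  Set.range fun k : ℤ => (f.toEquiv ^ k) v

/-- `O^f(S)`: the union of the `f`-orbits of elements of `S`. -/
def fOrbitSet {V : Type*} {G : SimpleGraph V} (f : G ≃g G) (S : Set V) : Set V :=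
  ⋃ a ∈ S, fOrbit f a

/-- Conditions (1)–(4) defining the class `C₀`. -/
def C0Cond {V : Type*} (G : SimpleGraph V) (f : G ≃g G) : Prop :=
  (∀ v : V, (fOrbit f v).Infinite) ∧
  (∀ W : Finset V, ∃ v : V, ∀ w ∈ W, v ∉ fOrbit f w) ∧
  (∀ A B : Finset V, Disjoint A B → ∃ v : V,
    v ∉ fOrbitSet f (↑A ∪ ↑B) ∧ (∀ a ∈ A, G.Adj a v) ∧
    ∀ y ∈ fOrbitSet f (↑A ∪ ↑B) \ ↑A, ¬ G.Adj y v) ∧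
  (∀ v : V, ∀ k : ℤ, ¬ G.Adj v ((f.toEquiv ^ k) v)) ∧
  (∀ v w : V, {k : ℤ | G.Adj v ((f.toEquiv ^ k) w)}.Finite)

section Aux
variable {V : Type*} {G : SimpleGraph V}

lemma zpow_add_apply (σ : Equiv.Perm V) (a b : ℤ) (x : V) :
    (σ ^ (a + b)) x = (σ ^ a) ((σ ^ b) x) := by
  rw [zpow_add, Equiv.Perm.mul_apply]

lemma zpow_neg_cancel (σ : Equiv.Perm V) (a : ℤ) (x : V) :
    (σ ^ (-a)) ((σ ^ a) x) = x := by
  rw [← zpow_add_apply]; simp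

lemma adj_apply (f : G ≃g G) (x y : V) :
    G.Adj (f.toEquiv x) (f.toEquiv y) ↔ G.Adj x y := f.map_rel_iff

lemma adj_zpow (f : G ≃g G) (k : ℤ) (x y : V) :
    G.Adj ((f.toEquiv ^ k) x) ((f.toEquiv ^ k) y) ↔ G.Adj x y := by
  induction k using Int.induction_on generalizing x y with
  | zero => simp
  | succ n ih =>
      rw [zpow_add_one]
      simp only [Equiv.Perm.mul_apply]
      exact (ih _ _).trans (adj_apply f x y)
  | pred n ih =>
      rw [zpow_sub_one]
      simp only [Equiv.Perm.mul_apply]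
      refine (ih _ _).trans ?_
      constructor
      · intro h
        have := (adj_apply f _ _).mpr h
        simpa using this
      · intro h
        exact (adj_apply f _ _).mp (by simpa using h)

lemma adj_shift (f : G ≃g G) (a b : ℤ) (u w : V) :
    G.Adj ((f.toEquiv ^ a) u) ((f.toEquiv ^ b) w) ↔ G.Adj u ((f.toEquiv ^ (b - a)) w) := by
  rw [← adj_zpow f a u ((f.toEquiv ^ (b - a)) w), ← zpow_add_apply, add_sub_cancel]

lemma fixed_zero_of_infinite (f : G ≃g G) {v : V} (hv : (fOrbit f v).Infinite)
    {k : ℤ} (h : (f.toEquiv ^ k) v = v) : k = 0 := by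
  by_contra hk
  have hd : (0:ℤ) < k.natAbs := by
    exact_mod_cast Int.natAbs_pos.mpr hk
  have hfix : (f.toEquiv ^ (k.natAbs : ℤ)) v = v := by
    rcases Int.natAbs_eq k with h1 | h1
    · rw [← h1]; exact h
    · have : (f.toEquiv ^ (k.natAbs:ℤ)) ((f.toEquiv ^ (-(k.natAbs:ℤ))) v) =
          (f.toEquiv ^ (k.natAbs:ℤ)) v := by
        rw [show (-(k.natAbs:ℤ)) = k from h1.symm, h]
      rw [← zpow_add_apply, add_neg_cancel] at this
      simpa using this.symm
  have hmul : ∀ q : ℤ, (f.toEquiv ^ ((k.natAbs:ℤ) * q)) v = v := by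
    intro q
    rw [zpow_mul]
    induction q using Int.induction_on with
    | zero => simp
    | succ n ih => rw [zpow_add_one, Equiv.Perm.mul_apply]
                   rw [show ((f.toEquiv ^ (k.natAbs:ℤ))) v = v from hfix]; exact ih
    | pred n ih => rw [zpow_sub_one, Equiv.Perm.mul_apply]
                   have : (f.toEquiv ^ (k.natAbs:ℤ))⁻¹ v = v := by
                     conv_lhs => rw [← hfix]
                     simp
                   rw [this]; exact ih
  have key : ∀ m : ℤ, (f.toEquiv ^ m) v = (f.toEquiv ^ (m % (k.natAbs:ℤ))) v := by
    intro m
    conv_lhs => rw [← Int.mul_ediv_add_emod m (k.natAbs:ℤ)]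
    rw [add_comm, zpow_add_apply, hmul]
  apply hv
  have hsub : fOrbit f v ⊆ (fun m : ℤ => (f.toEquiv ^ m) v) '' (Set.Icc 0 (k.natAbs:ℤ)) := by
    rintro _ ⟨m, rfl⟩
    exact ⟨m % (k.natAbs:ℤ), ⟨Int.emod_nonneg m (by omega), le_of_lt (Int.emod_lt_of_pos m hd)⟩,
      (key m).symm⟩
  exact ((Set.finite_Icc _ _).image _).subset hsub

end Aux

section Good
variable {V : Type*} (G : SimpleGraph V)

/-- A good partial matching of orbit representatives. -/
def Good (f f' : G ≃g G) (L : List (V × V)) : Prop :=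
  (∀ p ∈ L, ∀ q ∈ L, ∀ k : ℤ, (f.toEquiv ^ k) p.1 = q.1 → (f'.toEquiv ^ k) p.2 = q.2) ∧
  (∀ p ∈ L, ∀ q ∈ L, ∀ k : ℤ, (f'.toEquiv ^ k) p.2 = q.2 → (f.toEquiv ^ k) p.1 = q.1) ∧
  (∀ p ∈ L, ∀ q ∈ L, ∀ m : ℤ,
    G.Adj p.1 ((f.toEquiv ^ m) q.1) ↔ G.Adj p.2 ((f'.toEquiv ^ m) q.2))

variable {G}

lemma good_nil (f f' : G ≃g G) : Good G f f' [] := by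
  refine ⟨?_, ?_, ?_⟩ <;> simp

lemma good_swap {f f' : G ≃g G} {L : List (V × V)} (h : Good G f f' L) :
    Good G f' f (L.map Prod.swap) := by
  obtain ⟨h1, h2, h3⟩ := h
  refine ⟨?_, ?_, ?_⟩ <;>
  · simp only [List.mem_map]
    rintro _ ⟨p, hp, rfl⟩ _ ⟨q, hq, rfl⟩ k
    first
      | exact h2 p hp q hq k
      | exact h1 p hp q hq k
      | exact (h3 p hp q hq k).symm

end Good

section Ext
variable {V : Type*} {G : SimpleGraph V}

lemma shift_eq (σ : Equiv.Perm V) {j k : ℤ} {u v : V} (h : (σ ^ j) u = (σ ^ k) v) :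
    (σ ^ (j - k)) u = v := by
  have h2 := congrArg (σ ^ (-k)) h
  rw [zpow_neg_cancel, ← zpow_add_apply, show -k + j = j - k by ring] at h2
  exact h2

lemma unshift_eq (σ : Equiv.Perm V) {j k : ℤ} {u v : V} (h : (σ ^ (j - k)) u = v) :
    (σ ^ j) u = (σ ^ k) v := by
  have h2 := congrArg (σ ^ k) h
  rw [← zpow_add_apply, show k + (j - k) = j by ring] at h2
  exact h2

lemma adj_swap (f : G ≃g G) (m : ℤ) (u w : V) :
    G.Adj u ((f.toEquiv ^ m) w) ↔ G.Adj w ((f.toEquiv ^ (-m)) u) := by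
  rw [← adj_zpow f (-m) u ((f.toEquiv ^ m) w), zpow_neg_cancel]
  exact G.adj_comm _ _

lemma ext_left (f f' : G ≃g G) (hf : C0Cond G f) (hf' : C0Cond G f')
    {L : List (V × V)} (hL : Good G f f' L) (x : V) :
    ∃ y : V, Good G f f' ((x, y) :: L) := by
  classical
  obtain ⟨hL1, hL2, hL3⟩ := hL
  by_cases hx : ∃ p ∈ L, ∃ k : ℤ, (f.toEquiv ^ k) p.1 = x
  · -- x lies in an existing orbit
    obtain ⟨p, hp, k, hk⟩ := hx
    subst hk
    refine ⟨(f'.toEquiv ^ k) p.2, ?_, ?_, ?_⟩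
    · intro a ha b hb j h
      rcases List.mem_cons.mp ha with rfl | ha <;> rcases List.mem_cons.mp hb with rfl | hb
      · simp only at h ⊢
        rw [← zpow_add_apply] at h ⊢
        have h1 := shift_eq f.toEquiv h
        rw [add_sub_cancel_right] at h1
        have h2 := hL1 p hp p hp j h1
        refine unshift_eq f'.toEquiv ?_
        rw [add_sub_cancel_right]; exact h2
      · simp only at h ⊢
        rw [← zpow_add_apply] at h ⊢
        exact hL1 p hp b hb (j + k) h
      · simp only at h ⊢
        exact unshift_eq f'.toEquiv (hL1 a ha p hp (j - k) (shift_eq f.toEquiv h))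
      · exact hL1 a ha b hb j h
    · intro a ha b hb j h
      rcases List.mem_cons.mp ha with rfl | ha <;> rcases List.mem_cons.mp hb with rfl | hb
      · simp only at h ⊢
        rw [← zpow_add_apply] at h ⊢
        have h1 := shift_eq f'.toEquiv h
        rw [add_sub_cancel_right] at h1
        have h2 := hL2 p hp p hp j h1
        refine unshift_eq f.toEquiv ?_
        rw [add_sub_cancel_right]; exact h2
      · simp only at h ⊢
        rw [← zpow_add_apply] at h ⊢
        exact hL2 p hp b hb (j + k) h
      · simp only at h ⊢
        exact unshift_eq f.toEquiv (hL2 a ha p hp (j - k) (shift_eq f'.toEquiv h))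
      · exact hL2 a ha b hb j h
    · intro a ha b hb m
      rcases List.mem_cons.mp ha with rfl | ha <;> rcases List.mem_cons.mp hb with rfl | hb
      · simp only
        rw [← zpow_add_apply, ← zpow_add_apply, adj_shift f k (m + k), adj_shift f' k (m + k),
          add_sub_cancel_right]
        exact hL3 p hp p hp m
      · simp only
        rw [adj_shift f k m, adj_shift f' k m]
        exact hL3 p hp b hb (m - k)
      · simp only
        rw [← zpow_add_apply, ← zpow_add_apply]
        exact hL3 a ha p hp (m + k)
      · exact hL3 a ha b hb m
  · -- x starts a fresh orbit
    push_neg at hx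
    have hf5 := hf.2.2.2.2
    set A : Finset V :=
      L.toFinset.biUnion
        (fun p => (hf5 p.1 x).toFinset.image (fun m : ℤ => (f'.toEquiv ^ (-m)) p.2)) with hA
    have memA : ∀ u : V, u ∈ A ↔
        ∃ p ∈ L, ∃ m : ℤ, G.Adj p.1 ((f.toEquiv ^ m) x) ∧ (f'.toEquiv ^ (-m)) p.2 = u := by
      intro u
      simp only [hA, Finset.mem_biUnion, Finset.mem_image, Set.Finite.mem_toFinset,
        Set.mem_setOf_eq, List.mem_toFinset]
    set B : Finset V := (L.toFinset.image Prod.snd) \ A with hB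
    obtain ⟨y, hy1, hy2, hy3⟩ := hf'.2.2.1 A B Finset.disjoint_sdiff
    have hmemAB : ∀ p ∈ L, p.2 ∈ (↑A ∪ ↑B : Set V) := by
      intro p hp
      by_cases h : p.2 ∈ A
      · exact Or.inl h
      · refine Or.inr ?_
        simp only [hB, Finset.coe_sdiff, Set.mem_diff, Finset.coe_image, Set.mem_image,
          Finset.mem_coe, List.mem_toFinset]
        exact ⟨⟨p, hp, rfl⟩, h⟩
    have horb : ∀ p ∈ L, ∀ j : ℤ, (f'.toEquiv ^ j) p.2 ∈ fOrbitSet f' (↑A ∪ ↑B) := by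
      intro p hp j
      exact Set.mem_biUnion (hmemAB p hp) ⟨j, rfl⟩
    have hkey : ∀ p ∈ L, ∀ m : ℤ,
        (G.Adj p.2 ((f'.toEquiv ^ m) y) ↔ G.Adj p.1 ((f.toEquiv ^ m) x)) := by
      intro p hp m
      have hrw : G.Adj p.2 ((f'.toEquiv ^ m) y) ↔ G.Adj ((f'.toEquiv ^ (-m)) p.2) y := by
        rw [← adj_zpow f' (-m) p.2 ((f'.toEquiv ^ m) y), zpow_neg_cancel]
      by_cases hadj : G.Adj p.1 ((f.toEquiv ^ m) x)
      · refine iff_of_true (hrw.mpr ?_) hadj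
        exact hy2 _ ((memA _).mpr ⟨p, hp, m, hadj, rfl⟩)
      · refine iff_of_false (fun hc => ?_) hadj
        have hnotA : (f'.toEquiv ^ (-m)) p.2 ∉ A := by
          intro hmem
          obtain ⟨q, hq, m', hadj', heq⟩ := (memA _).mp hmem
          have h1 := shift_eq f'.toEquiv heq
          rw [show (-m') - (-m) = m - m' by ring] at h1
          have h2 := hL2 q hq p hp (m - m') h1
          apply hadj
          rw [← h2, adj_shift f (m - m') m, show m - (m - m') = m' by ring]
          exact hadj'
        exact hy3 _ ⟨horb p hp (-m), hnotA⟩ (hrw.mp hc)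
    refine ⟨y, ?_, ?_, ?_⟩
    · intro a ha b hb j h
      rcases List.mem_cons.mp ha with rfl | ha <;> rcases List.mem_cons.mp hb with rfl | hb
      · simp only at h ⊢
        have h0 := fixed_zero_of_infinite f (hf.1 x) h
        subst h0; simp
      · simp only at h ⊢
        exfalso
        apply hx b hb (-j)
        rw [← h, zpow_neg_cancel]
      · simp only at h ⊢
        exact absurd h (hx a ha j)
      · exact hL1 a ha b hb j h
    · intro a ha b hb j h
      rcases List.mem_cons.mp ha with rfl | ha <;> rcases List.mem_cons.mp hb with rfl | hb
      · simp only at h ⊢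
        have h0 := fixed_zero_of_infinite f' (hf'.1 y) h
        subst h0; simp
      · simp only at h ⊢
        exfalso
        apply hy1
        have h2 := congrArg (f'.toEquiv ^ (-j)) h
        rw [zpow_neg_cancel] at h2
        rw [h2]
        exact horb b hb (-j)
      · simp only at h ⊢
        exfalso
        apply hy1
        rw [← h]
        exact horb a ha j
      · exact hL2 a ha b hb j h
    · intro a ha b hb m
      rcases List.mem_cons.mp ha with rfl | ha <;> rcases List.mem_cons.mp hb with rfl | hb
      · simp only
        exact iff_of_false (hf.2.2.2.1 x m) (hf'.2.2.2.1 y m)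
      · simp only
        exact (adj_swap f m x b.1).trans ((hkey b hb (-m)).symm.trans (adj_swap f' m y b.2).symm)
      · simp only
        exact (hkey a ha m).symm
      · exact hL3 a ha b hb m

lemma ext_right (f f' : G ≃g G) (hf : C0Cond G f) (hf' : C0Cond G f')
    {L : List (V × V)} (hL : Good G f f' L) (y : V) :
    ∃ x : V, Good G f f' ((x, y) :: L) := by
  obtain ⟨x, hx⟩ := ext_left f' f hf' hf (good_swap hL) y
  refine ⟨x, ?_⟩
  have h2 := good_swap hx
  simpa [List.map_map, Function.comp, Prod.swap] using h2

end Ext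

section Chain
variable {V : Type*} {G : SimpleGraph V}

noncomputable def chainStep (f f' : G ≃g G) (hf : C0Cond G f) (hf' : C0Cond G f') (e : ℕ → V)
    (n : ℕ) (c : {L : List (V × V) // Good G f f' L}) : {L : List (V × V) // Good G f f' L} :=
  if Even n then
    ⟨(e (n/2), Classical.choose (ext_left f f' hf hf' c.2 (e (n/2)))) :: c.1,
      Classical.choose_spec (ext_left f f' hf hf' c.2 (e (n/2)))⟩
  else
    ⟨(Classical.choose (ext_right f f' hf hf' c.2 (e (n/2))), e (n/2)) :: c.1,
      Classical.choose_spec (ext_right f f' hf hf' c.2 (e (n/2)))⟩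

noncomputable def chain (f f' : G ≃g G) (hf : C0Cond G f) (hf' : C0Cond G f') (e : ℕ → V) :
    ℕ → {L : List (V × V) // Good G f f' L} :=
  fun n => Nat.rec ⟨[], good_nil f f'⟩ (chainStep f f' hf hf' e) n

variable (f f' : G ≃g G) (hf : C0Cond G f) (hf' : C0Cond G f') (e : ℕ → V)

lemma chain_succ (n : ℕ) :
    chain f f' hf hf' e (n+1) = chainStep f f' hf hf' e n (chain f f' hf hf' e n) := rfl

lemma chain_cons (n : ℕ) :
    ∃ q, (chain f f' hf hf' e (n+1)).1 = q :: (chain f f' hf hf' e n).1 := by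
  rw [chain_succ, chainStep]
  split <;> exact ⟨_, rfl⟩

lemma chain_mono {n m : ℕ} (h : n ≤ m) {p : V × V}
    (hp : p ∈ (chain f f' hf hf' e n).1) : p ∈ (chain f f' hf hf' e m).1 := by
  induction m with
  | zero => exact (Nat.le_zero.mp h) ▸ hp
  | succ m ih =>
      rcases Nat.lt_or_ge n (m+1) with h' | h'
      · obtain ⟨q, hq⟩ := chain_cons f f' hf hf' e m
        rw [hq]
        exact List.mem_cons_of_mem q (ih (Nat.lt_succ_iff.mp h'))
      · have : n = m + 1 := le_antisymm h h'
        exact this ▸ hp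

lemma chain_cover_left (m : ℕ) :
    ∃ w, (e m, w) ∈ (chain f f' hf hf' e (2*m+1)).1 := by
  rw [chain_succ, chainStep, if_pos (even_two_mul m)]
  simp only [Nat.mul_div_cancel_left m two_pos]
  exact ⟨_, List.mem_cons_self⟩

lemma chain_cover_right (m : ℕ) :
    ∃ v, (v, e m) ∈ (chain f f' hf hf' e (2*m+2)).1 := by
  have hodd : ¬ Even (2*m+1) := by simp [Nat.even_add_one, even_two_mul m]
  have hdiv : (2*m+1)/2 = m := by omega
  rw [chain_succ, chainStep, if_neg hodd]
  simp only [hdiv]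
  exact ⟨_, List.mem_cons_self⟩

end Chain

/-- Any two automorphisms of the random graph satisfying conditions (1)–(4) are
conjugate in `Aut(R)`. -/
theorem c0_is_one_class {V : Type*} [Countable V] [Infinite V]
    (G : SimpleGraph V) (hG : ExtensionProperty G)
    (f f' : G ≃g G) (hf : C0Cond G f) (hf' : C0Cond G f') :
    ∃ g : G ≃g G, ∀ v : V, g (f v) = f' (g v) := by
  classical
  obtain ⟨e, he⟩ := exists_surjective_nat V
  set ch := chain f f' hf hf' e with hch
  -- The limit relation
  set Rel : V → V → Prop := fun v w => ∃ n, ∃ p ∈ (ch n).1, ∃ k : ℤ,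
    (f.toEquiv ^ k) p.1 = v ∧ (f'.toEquiv ^ k) p.2 = w with hRel
  have hfunc : ∀ v w w', Rel v w → Rel v w' → w = w' := by
    rintro v w w' ⟨n, p, hp, k, hk1, hk2⟩ ⟨n', q, hq, k', hk1', hk2'⟩
    have hp' := chain_mono f f' hf hf' e (le_max_left n n') hp
    have hq' := chain_mono f f' hf hf' e (le_max_right n n') hq
    have hG1 := (ch (max n n')).2.1
    have h1 : (f.toEquiv ^ (k - k')) p.1 = q.1 := shift_eq f.toEquiv (hk1.trans hk1'.symm)
    have h2 := hG1 p hp' q hq' (k - k') h1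
    rw [← hk2, ← hk2']
    exact unshift_eq f'.toEquiv h2
  have hinj : ∀ v v' w, Rel v w → Rel v' w → v = v' := by
    rintro v v' w ⟨n, p, hp, k, hk1, hk2⟩ ⟨n', q, hq, k', hk1', hk2'⟩
    have hp' := chain_mono f f' hf hf' e (le_max_left n n') hp
    have hq' := chain_mono f f' hf hf' e (le_max_right n n') hq
    have hG2 := (ch (max n n')).2.2.1
    have h1 : (f'.toEquiv ^ (k - k')) p.2 = q.2 := shift_eq f'.toEquiv (hk2.trans hk2'.symm)
    have h2 := hG2 p hp' q hq' (k - k') h1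
    rw [← hk1, ← hk1']
    exact unshift_eq f.toEquiv h2
  have htot : ∀ v, ∃ w, Rel v w := by
    intro v
    obtain ⟨m, rfl⟩ := he v
    obtain ⟨w, hw⟩ := chain_cover_left f f' hf hf' e m
    exact ⟨w, 2*m+1, (e m, w), hw, 0, by simp, by simp⟩
  have hsur : ∀ w, ∃ v, Rel v w := by
    intro w
    obtain ⟨m, rfl⟩ := he w
    obtain ⟨v, hv⟩ := chain_cover_right f f' hf hf' e m
    exact ⟨v, 2*m+2, (v, e m), hv, 0, by simp, by simp⟩
  have hadj : ∀ v w v' w', Rel v w → Rel v' w' → (G.Adj v v' ↔ G.Adj w w') := by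
    rintro v w v' w' ⟨n, p, hp, k, hk1, hk2⟩ ⟨n', q, hq, k', hk1', hk2'⟩
    have hp' := chain_mono f f' hf hf' e (le_max_left n n') hp
    have hq' := chain_mono f f' hf hf' e (le_max_right n n') hq
    have hG3 := (ch (max n n')).2.2.2
    rw [← hk1, ← hk2, ← hk1', ← hk2', adj_shift f k k', adj_shift f' k k']
    exact hG3 p hp' q hq' (k' - k)
  have hcomm : ∀ v w, Rel v w → Rel (f v) (f' w) := by
    rintro v w ⟨n, p, hp, k, hk1, hk2⟩
    refine ⟨n, p, hp, 1 + k, ?_, ?_⟩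
    · rw [zpow_add_apply, hk1, zpow_one]; rfl
    · rw [zpow_add_apply, hk2, zpow_one]; rfl
  -- build the bijection
  set g0 : V → V := fun v => Classical.choose (htot v) with hg0def
  have hg0 : ∀ v, Rel v (g0 v) := fun v => Classical.choose_spec (htot v)
  have hbij : Function.Bijective g0 := by
    constructor
    · intro a b hab
      exact hinj a b (g0 a) (hg0 a) (hab ▸ hg0 b)
    · intro w
      obtain ⟨v, hv⟩ := hsur w
      exact ⟨v, hfunc v (g0 v) w (hg0 v) hv⟩
  refine ⟨⟨Equiv.ofBijective g0 hbij, ?_⟩, ?_⟩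
  · intro a b
    exact (hadj a (g0 a) b (g0 b) (hg0 a) (hg0 b)).symm
  · intro v
    show g0 (f v) = f' (g0 v)
    exact hfunc (f v) (g0 (f v)) (f' (g0 v)) (hg0 (f v)) (hcomm v (g0 v) (hg0 v))
end

section
/- Let R be the random graph, f ∈ Aut(R), and suppose that for some finite disjoint sets A, B ⊆ V, every vertex v which is adjacent to all of A and to none of B lies in O^f(A∪B). Then, setting F = A ∪ B, the set U = {v : v adjacent to all of A, to none of B} is infinite, the pointwise stabilizer Aut(R)_(F) acts transitively on U ∖ F, and for every v ∈ U ∖ F the orbit Aut(R)_(F)(v) is an infinite set covered by finitely many f-orbits. -/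
section Aux
variable {V : Type*} {G : SimpleGraph V}

lemma ext_avoid (hG : ExtensionProperty G) (A B T : Finset V) (hAB : Disjoint A B) :
    ∃ v : V, (∀ a ∈ A, G.Adj a v) ∧ (∀ b ∈ B, ¬ G.Adj b v) ∧ v ∉ T := by
  classical
  obtain ⟨w, hw, -⟩ := hG (A ∪ B ∪ T) ∅ (Finset.disjoint_empty_right _)
  have hwA : w ∉ A := fun h => G.irrefl (hw w (by simp [h]))
  obtain ⟨v, hv1, hv2⟩ := hG A (insert w B)
    (by rw [Finset.disjoint_insert_right]; exact ⟨hwA, hAB⟩)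
  refine ⟨v, hv1, fun b hb => hv2 b (Finset.mem_insert_of_mem hb), fun hvT => ?_⟩
  exact hv2 w (Finset.mem_insert_self _ _) ((hw v (by simp [hvT])).symm)

structure PIso {V : Type*} (G : SimpleGraph V) where
  s : Finset (V × V)
  inj1 : ∀ p ∈ s, ∀ q ∈ s, p.1 = q.1 → p = q
  inj2 : ∀ p ∈ s, ∀ q ∈ s, p.2 = q.2 → p = q
  adj : ∀ p ∈ s, ∀ q ∈ s, (G.Adj p.1 q.1 ↔ G.Adj p.2 q.2)

lemma extend_left (hG : ExtensionProperty G) (P : PIso G) (x : V) :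
    ∃ Q : PIso G, P.s ⊆ Q.s ∧ ∃ y, (x, y) ∈ Q.s := by
  classical
  by_cases hx : ∃ y, (x, y) ∈ P.s
  · exact ⟨P, subset_rfl, hx⟩
  · set A := (P.s.filter (fun p => G.Adj p.1 x)).image Prod.snd with hA
    set B := (P.s.filter (fun p => ¬ G.Adj p.1 x)).image Prod.snd with hB
    have hABd : Disjoint A B := by
      rw [Finset.disjoint_left]
      rintro b hbA hbB
      simp only [hA, hB, Finset.mem_image, Finset.mem_filter] at hbA hbB
      obtain ⟨p, ⟨hp, hpx⟩, hpb⟩ := hbA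
      obtain ⟨q, ⟨hq, hqx⟩, hqb⟩ := hbB
      have := P.inj2 p hp q hq (hpb.trans hqb.symm)
      rw [this] at hpx; exact hqx hpx
    obtain ⟨y, hy1, hy2, hy3⟩ := ext_avoid hG A B (P.s.image Prod.snd) hABd
    have hysnd : ∀ q ∈ P.s, q.2 ≠ y := by
      intro q hq h
      exact hy3 (h ▸ Finset.mem_image_of_mem Prod.snd hq)
    have hadj : ∀ q ∈ P.s, (G.Adj q.1 x ↔ G.Adj q.2 y) := by
      intro q hq
      constructor
      · intro h
        exact hy1 q.2 (Finset.mem_image_of_mem _ (Finset.mem_filter.mpr ⟨hq, h⟩))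
      · intro h
        by_contra hc
        exact hy2 q.2 (Finset.mem_image_of_mem _ (Finset.mem_filter.mpr ⟨hq, hc⟩)) h
    refine ⟨⟨insert (x, y) P.s, ?_, ?_, ?_⟩, Finset.subset_insert _ _,
      y, Finset.mem_insert_self _ _⟩
    · intro p hp q hq h
      rcases Finset.mem_insert.mp hp with rfl | hp <;>
        rcases Finset.mem_insert.mp hq with rfl | hq
      · rfl
      · have h' : x = q.1 := h
        exact absurd ⟨q.2, by rw [h']; simpa using hq⟩ hx
      · have h' : x = p.1 := h.symm
        exact absurd ⟨p.2, by rw [h']; simpa using hp⟩ hx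
      · exact P.inj1 p hp q hq h
    · intro p hp q hq h
      rcases Finset.mem_insert.mp hp with rfl | hp <;>
        rcases Finset.mem_insert.mp hq with rfl | hq
      · rfl
      · exact absurd h.symm (hysnd q hq)
      · exact absurd h (hysnd p hp)
      · exact P.inj2 p hp q hq h
    · intro p hp q hq
      rcases Finset.mem_insert.mp hp with rfl | hp <;>
        rcases Finset.mem_insert.mp hq with rfl | hq
      · exact iff_of_false (G.irrefl) (G.irrefl)
      · rw [G.adj_comm x q.1, G.adj_comm y q.2]; exact hadj q hq
      · exact hadj p hp
      · exact P.adj p hp q hq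

open Classical in
noncomputable def PIso.flip (P : PIso G) : PIso G where
  s := P.s.image Prod.swap
  inj1 := by
    intro p hp q hq h
    simp only [Finset.mem_image] at hp hq
    obtain ⟨p0, hp0, rfl⟩ := hp
    obtain ⟨q0, hq0, rfl⟩ := hq
    rw [P.inj2 p0 hp0 q0 hq0 (by simpa using h)]
  inj2 := by
    intro p hp q hq h
    simp only [Finset.mem_image] at hp hq
    obtain ⟨p0, hp0, rfl⟩ := hp
    obtain ⟨q0, hq0, rfl⟩ := hq
    rw [P.inj1 p0 hp0 q0 hq0 (by simpa using h)]
  adj := by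
    intro p hp q hq
    simp only [Finset.mem_image] at hp hq
    obtain ⟨p0, hp0, rfl⟩ := hp
    obtain ⟨q0, hq0, rfl⟩ := hq
    simpa using (P.adj p0 hp0 q0 hq0).symm

lemma mem_flip (P : PIso G) (x y : V) : (x, y) ∈ P.flip.s ↔ (y, x) ∈ P.s := by
  classical
  simp only [PIso.flip, Finset.mem_image]
  constructor
  · rintro ⟨p, hp, h⟩
    have : p = (y, x) := by
      have := congrArg Prod.swap h
      simpa using this
    rwa [this] at hp
  · intro h
    exact ⟨(y, x), h, rfl⟩

lemma extend_right (hG : ExtensionProperty G) (P : PIso G) (y : V) :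
    ∃ Q : PIso G, P.s ⊆ Q.s ∧ ∃ x, (x, y) ∈ Q.s := by
  obtain ⟨Q', hQ1, x, hxy⟩ := extend_left hG P.flip y
  refine ⟨Q'.flip, ?_, x, (mem_flip _ _ _).mpr hxy⟩
  intro p hp
  have : (p.2, p.1) ∈ Q'.s := hQ1 ((mem_flip P p.2 p.1).mpr (by simpa using hp))
  have := (mem_flip Q' p.1 p.2).mpr this
  simpa using this

lemma exists_global [Countable V] [Nonempty V] (hG : ExtensionProperty G) (P0 : PIso G) :
    ∃ g : G ≃g G, ∀ p ∈ P0.s, g p.1 = p.2 := by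
  classical
  obtain ⟨e, he⟩ := exists_surjective_nat V
  let step : ℕ → PIso G → PIso G := fun n Q =>
    if n % 2 = 0 then (extend_left hG Q (e (n / 2))).choose
    else (extend_right hG Q (e (n / 2))).choose
  let C : ℕ → PIso G := fun n => Nat.rec P0 step n
  have hCs : ∀ n, C (n + 1) = step n (C n) := fun n => rfl
  have hmono : ∀ n, (C n).s ⊆ (C (n + 1)).s := by
    intro n
    by_cases h : n % 2 = 0
    · have h1 : C (n + 1) = (extend_left hG (C n) (e (n / 2))).choose := by
        rw [hCs]; simp only [step, if_pos h]
      rw [h1]; exact (extend_left hG (C n) (e (n / 2))).choose_spec.1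
    · have h1 : C (n + 1) = (extend_right hG (C n) (e (n / 2))).choose := by
        rw [hCs]; simp only [step, if_neg h]
      rw [h1]; exact (extend_right hG (C n) (e (n / 2))).choose_spec.1
  have hmono' : ∀ m n, m ≤ n → (C m).s ⊆ (C n).s := by
    intro m n h
    induction h with
    | refl => exact subset_rfl
    | step h ih => exact ih.trans (hmono _)
  have totL : ∀ x : V, ∃ n y, (x, y) ∈ (C n).s := by
    intro x
    obtain ⟨k, rfl⟩ := he x
    have hmod : (2 * k) % 2 = 0 := by omega
    have hdiv : (2 * k) / 2 = k := by omega
    have h1 : C (2 * k + 1) = (extend_left hG (C (2 * k)) (e k)).choose := by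
      rw [hCs]; simp only [step, if_pos hmod, hdiv]
    obtain ⟨y, hy⟩ := (extend_left hG (C (2 * k)) (e k)).choose_spec.2
    exact ⟨2 * k + 1, y, h1 ▸ hy⟩
  have totR : ∀ y : V, ∃ n x, (x, y) ∈ (C n).s := by
    intro y
    obtain ⟨k, rfl⟩ := he y
    have hmod : ¬ (2 * k + 1) % 2 = 0 := by omega
    have hdiv : (2 * k + 1) / 2 = k := by omega
    have h1 : C (2 * k + 2) = (extend_right hG (C (2 * k + 1)) (e k)).choose := by
      rw [hCs]; simp only [step, if_neg hmod, hdiv]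
    obtain ⟨x, hx⟩ := (extend_right hG (C (2 * k + 1)) (e k)).choose_spec.2
    exact ⟨2 * k + 2, x, h1 ▸ hx⟩
  have key1 : ∀ {n m : ℕ} {x y y' : V}, (x, y) ∈ (C n).s → (x, y') ∈ (C m).s → y = y' := by
    intro n m x y y' h1 h2
    have h1' := hmono' n (max n m) (le_max_left _ _) h1
    have h2' := hmono' m (max n m) (le_max_right _ _) h2
    exact congrArg Prod.snd ((C (max n m)).inj1 _ h1' _ h2' rfl)
  have key2 : ∀ {n m : ℕ} {x x' y : V}, (x, y) ∈ (C n).s → (x', y) ∈ (C m).s → x = x' := by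
    intro n m x x' y h1 h2
    have h1' := hmono' n (max n m) (le_max_left _ _) h1
    have h2' := hmono' m (max n m) (le_max_right _ _) h2
    exact congrArg Prod.fst ((C (max n m)).inj2 _ h1' _ h2' rfl)
  have hgex : ∀ x : V, ∃ y, ∃ n, (x, y) ∈ (C n).s := by
    intro x; obtain ⟨n, y, h⟩ := totL x; exact ⟨y, n, h⟩
  have hhex : ∀ y : V, ∃ x, ∃ n, (x, y) ∈ (C n).s := by
    intro y; obtain ⟨n, x, h⟩ := totR y; exact ⟨x, n, h⟩
  choose gf hgf using hgex
  choose hf hhf using hhex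
  have linv : Function.LeftInverse hf gf := by
    intro x
    obtain ⟨n, hn⟩ := hgf x
    obtain ⟨m, hm⟩ := hhf (gf x)
    exact (key2 hm hn)
  have rinv : Function.RightInverse hf gf := by
    intro y
    obtain ⟨n, hn⟩ := hhf y
    obtain ⟨m, hm⟩ := hgf (hf y)
    exact (key1 hm hn)
  have hadj : ∀ x x' : V, G.Adj (gf x) (gf x') ↔ G.Adj x x' := by
    intro x x'
    obtain ⟨n, hn⟩ := hgf x
    obtain ⟨m, hm⟩ := hgf x'
    have h1 := hmono' n (max n m) (le_max_left _ _) hn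
    have h2 := hmono' m (max n m) (le_max_right _ _) hm
    exact ((C (max n m)).adj _ h1 _ h2).symm
  refine ⟨⟨⟨gf, hf, linv, rinv⟩, fun {a b} => hadj a b⟩, ?_⟩
  intro p hp
  obtain ⟨n, hn⟩ := hgf p.1
  have hp0 : (p.1, p.2) ∈ (C 0).s := hp
  exact key1 (m := 0) hn hp0

end Aux


/-- If every vertex adjacent to all of `A` and to nothing in `B` lies in `O^f(A ∪ B)`,
then with `F = A ∪ B` and `U` the set of such vertices: `U` is infinite, the pointwise
stabilizer of `F` acts transitively on `U \ F`, and for `v ∈ U \ F` its stabilizer orbit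
is an infinite set covered by finitely many `f`-orbits. -/
theorem stabilizer_orbit_covered {V : Type*} [Countable V] [Infinite V]
    (G : SimpleGraph V) (hG : ExtensionProperty G)
    (f : G ≃g G) (A B : Finset V) (hAB : Disjoint A B)
    (hcov : ∀ v : V, (∀ a ∈ A, G.Adj a v) → (∀ b ∈ B, ¬ G.Adj b v) →
      v ∈ fOrbitSet f (↑A ∪ ↑B)) :
    let U : Set V := {v : V | (∀ a ∈ A, G.Adj a v) ∧ ∀ b ∈ B, ¬ G.Adj b v}
    let F : Set V := ↑A ∪ ↑B
    U.Infinite ∧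
    (∀ v ∈ U \ F, ∀ w ∈ U \ F,
      ∃ g : G ≃g G, (∀ x ∈ F, g x = x) ∧ g v = w) ∧
    (∀ v ∈ U \ F,
      {w : V | ∃ g : G ≃g G, (∀ x ∈ F, g x = x) ∧ g v = w}.Infinite ∧
      ∃ S : Finset V,
        {w : V | ∃ g : G ≃g G, (∀ x ∈ F, g x = x) ∧ g v = w} ⊆ fOrbitSet f ↑S) := by
  classical
  intro U F
  -- fresh elements of U avoiding any finite set
  have hfresh : ∀ T : Finset V, ∃ u, u ∈ U ∧ u ∉ T := by
    intro T
    obtain ⟨u, h1, h2, h3⟩ := ext_avoid hG A B T hAB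
    exact ⟨u, ⟨h1, h2⟩, h3⟩
  have hUinf : U.Infinite := by
    by_contra h
    have hf : U.Finite := Set.not_infinite.mp h
    obtain ⟨u, hu, hT⟩ := hfresh hf.toFinset
    exact hT (hf.mem_toFinset.mpr hu)
  have hFfin : F.Finite := A.finite_toSet.union B.finite_toSet
  have hUF : (U \ F).Infinite := hUinf.diff hFfin
  -- transitivity
  have htrans : ∀ v ∈ U \ F, ∀ w ∈ U \ F,
      ∃ g : G ≃g G, (∀ x ∈ F, g x = x) ∧ g v = w := by
    intro v hv w hw
    have hvU : v ∈ U := hv.1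
    have hvF : v ∉ F := hv.2
    have hwU : w ∈ U := hw.1
    have hwF : w ∉ F := hw.2
    have hvAB : ∀ x ∈ A ∪ B, x ≠ v ∧ x ≠ w := by
      intro x hx
      constructor
      · rintro rfl
        exact hvF (by simpa [F] using hx)
      · rintro rfl
        exact hwF (by simpa [F] using hx)
    have hadjvw : ∀ x ∈ A ∪ B, (G.Adj x v ↔ G.Adj x w) := by
      intro x hx
      rcases Finset.mem_union.mp hx with hxA | hxB
      · exact iff_of_true (hvU.1 x hxA) (hwU.1 x hxA)
      · exact iff_of_false (hvU.2 x hxB) (hwU.2 x hxB)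
    set P0s : Finset (V × V) := ((A ∪ B).image fun x => (x, x)) ∪ {(v, w)} with hP0s
    have hmem : ∀ p ∈ P0s, (∃ x ∈ A ∪ B, p = (x, x)) ∨ p = (v, w) := by
      intro p hp
      rcases Finset.mem_union.mp hp with hp | hp
      · obtain ⟨x, hx, h⟩ := Finset.mem_image.mp hp
        exact Or.inl ⟨x, hx, h.symm⟩
      · exact Or.inr (Finset.mem_singleton.mp hp)
    have hinj1 : ∀ p ∈ P0s, ∀ q ∈ P0s, p.1 = q.1 → p = q := by
      intro p hp q hq h
      rcases hmem p hp with ⟨x, hx, rfl⟩ | rfl <;>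
        rcases hmem q hq with ⟨x', hx', rfl⟩ | rfl
      · simp only at h; rw [h]
      · simp only at h; exact absurd h (hvAB x hx).1
      · simp only at h; exact absurd h.symm (hvAB x' hx').1
      · rfl
    have hinj2 : ∀ p ∈ P0s, ∀ q ∈ P0s, p.2 = q.2 → p = q := by
      intro p hp q hq h
      rcases hmem p hp with ⟨x, hx, rfl⟩ | rfl <;>
        rcases hmem q hq with ⟨x', hx', rfl⟩ | rfl
      · simp only at h; rw [h]
      · simp only at h; exact absurd h (hvAB x hx).2
      · simp only at h; exact absurd h.symm (hvAB x' hx').2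
      · rfl
    have hadjP : ∀ p ∈ P0s, ∀ q ∈ P0s, (G.Adj p.1 q.1 ↔ G.Adj p.2 q.2) := by
      intro p hp q hq
      rcases hmem p hp with ⟨x, hx, rfl⟩ | rfl <;>
        rcases hmem q hq with ⟨x', hx', rfl⟩ | rfl
      · exact Iff.rfl
      · exact hadjvw x hx
      · simp only
        rw [G.adj_comm v x', G.adj_comm w x']
        exact hadjvw x' hx'
      · exact iff_of_false (G.irrefl) (G.irrefl)
    obtain ⟨g, hg⟩ := exists_global hG (⟨P0s, hinj1, hinj2, hadjP⟩ : PIso G)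
    refine ⟨g, ?_, ?_⟩
    · intro x hx
      have hx' : x ∈ A ∪ B := by
        rcases hx with h | h
        · exact Finset.mem_union_left _ h
        · exact Finset.mem_union_right _ h
      have : (x, x) ∈ P0s :=
        Finset.mem_union_left _ (Finset.mem_image_of_mem _ hx')
      simpa using hg (x, x) this
    · have : (v, w) ∈ P0s := Finset.mem_union_right _ (Finset.mem_singleton_self _)
      simpa using hg (v, w) this
  refine ⟨hUinf, htrans, ?_⟩
  intro v hv
  have hsub : U \ F ⊆ {w : V | ∃ g : G ≃g G, (∀ x ∈ F, g x = x) ∧ g v = w} := by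
    intro u hu
    exact htrans v hv u hu
  constructor
  · exact hUF.mono hsub
  · refine ⟨A ∪ B, ?_⟩
    rintro w ⟨g, hgF, rfl⟩
    have h1 : ∀ a ∈ A, G.Adj a (g v) := by
      intro a ha
      have hga : g a = a := hgF a (by simp [F, ha])
      rw [← hga]
      exact g.map_rel_iff.mpr (hv.1.1 a ha)
    have h2 : ∀ b ∈ B, ¬ G.Adj b (g v) := by
      intro b hb hadj
      have hgb : g b = b := hgF b (by simp [F, hb])
      rw [← hgb] at hadj
      exact hv.1.2 b hb (g.map_rel_iff.mp hadj)
    have := hcov (g v) h1 h2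
    rwa [Finset.coe_union]
end
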